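/- Let Γ be a group, Γ₊ ⊆ Γ a sub-semigroup, and R, L subgroups of Γ with R ⊆ Γ₊ and L ⊆ Γ₊. Let Ω be an abelian group with a translation-invariant partial order all of whose intervals are finite, let Λ₊ ⊆ Ω be a subset, let λ ↦ X^λ be a bijection from Λ₊ onto the set of (R,R)-double cosets contained in Γ₊, and let ν ↦ Y^ν be a bijection from Ω onto the set of (L,R)-double cosets of Γ. Assume (SH2): for all λ, μ ∈ Λ₊, X^λ·X^μ is contained in the union of the X^ν over ν ∈ Λ₊ with ν ≤ λ + μ; (SM1): for all λ ∈ Ω, μ ∈ Λ₊ and z ∈ Γ the set R\((Y^λ)⁻¹z ∩ X^μ) is finite; and (SM2): for all λ ∈ Ω and μ ∈ Λ₊, Y^λ·X^μ is contained in the union of the Y^ν over ν ∈ Ω with ν ≤ λ + μ. Then (SH1) holds: for all λ, μ ∈ Λ₊ and z ∈ Γ₊ the set R\((X^λ)⁻¹z ∩ X^μ) is finite. -/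

import Mathlib

open scoped Pointwise

namespace Stmt6

variable {Γ : Type*} [Group Γ]

/-- The orbit set `R\S` of left multiplication by the subgroup `R` on a subset `S ⊆ Γ`. -/
def leftOrbits (R : Subgroup Γ) (S : Set Γ) : Set (Set Γ) :=
  {C | ∃ g ∈ S, C = (R : Set Γ) * {g}}

/-- `A⁻¹x = {a⁻¹ · x : a ∈ A}`. -/
def invMul (A : Set Γ) (x : Γ) : Set Γ := (fun a => a⁻¹ * x) '' A

end Stmt6

open Stmt6 in
/-- Simplified criterion for a semi-infinite Hecke module datum: the fiber-finiteness
condition (SH1) follows from (SH2), (SM1) and (SM2). -/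
theorem stmt6 {Γ : Type*} [Group Γ] {Ω : Type*} [AddCommGroup Ω] [PartialOrder Ω]
    (hcov : ∀ a b c : Ω, a ≤ b → a + c ≤ b + c)
    (hint : ∀ a b : Ω, (Set.Icc a b).Finite)
    (Γp : Subsemigroup Γ) (R L : Subgroup Γ)
    (hR : (R : Set Γ) ⊆ (Γp : Set Γ)) (hL : (L : Set Γ) ⊆ (Γp : Set Γ))
    (Λp : Set Ω) (X : Ω → Set Γ) (Y : Ω → Set Γ)
    (hXdc : ∀ lam ∈ Λp, ∃ a ∈ Γp, X lam = DoubleCoset.doubleCoset a (R : Set Γ) (R : Set Γ))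
    (hXinj : ∀ lam ∈ Λp, ∀ mu ∈ Λp, X lam = X mu → lam = mu)
    (hXsurj : ∀ a ∈ Γp, ∃ lam ∈ Λp, X lam = DoubleCoset.doubleCoset a (R : Set Γ) (R : Set Γ))
    (hYdc : ∀ nu : Ω, ∃ a : Γ, Y nu = DoubleCoset.doubleCoset a (L : Set Γ) (R : Set Γ))
    (hYinj : ∀ nu mu : Ω, Y nu = Y mu → nu = mu)
    (hYsurj : ∀ a : Γ, ∃ nu : Ω, Y nu = DoubleCoset.doubleCoset a (L : Set Γ) (R : Set Γ))
    (SH2 : ∀ lam ∈ Λp, ∀ mu ∈ Λp,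
      X lam * X mu ⊆ ⋃ nu ∈ {nu | nu ∈ Λp ∧ nu ≤ lam + mu}, X nu)
    (SM1 : ∀ lam : Ω, ∀ mu ∈ Λp, ∀ z : Γ,
      (leftOrbits R (invMul (Y lam) z ∩ X mu)).Finite)
    (SM2 : ∀ lam : Ω, ∀ mu ∈ Λp,
      Y lam * X mu ⊆ ⋃ nu ∈ {nu : Ω | nu ≤ lam + mu}, Y nu) :
    ∀ lam ∈ Λp, ∀ mu ∈ Λp, ∀ z ∈ Γp,
      (leftOrbits R (invMul (X lam) z ∩ X mu)).Finite := by
  intro lam hlam mu hmu z hz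
  -- ν₀ : index of the double coset of 1
  obtain ⟨nu0, hnu0⟩ := hYsurj 1
  obtain ⟨kz, hkz⟩ := hYsurj z
  have hzY : z ∈ Y kz := hkz ▸ DoubleCoset.mem_doubleCoset_self L R z
  -- uniqueness of Y-cosets
  have Yuniq : ∀ {x : Γ} {n m : Ω}, x ∈ Y n → x ∈ Y m → n = m := by
    intro x n m hn hm
    obtain ⟨a, ha⟩ := hYdc n
    obtain ⟨b, hb⟩ := hYdc m
    apply hYinj
    rw [ha, hb, ← DoubleCoset.doubleCoset_eq_of_mem (ha ▸ hn), DoubleCoset.doubleCoset_eq_of_mem (hb ▸ hm)]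
  -- main inclusion
  have key : invMul (X lam) z ∩ X mu ⊆
      ⋃ nu ∈ Set.Icc (kz - mu) (nu0 + lam), invMul (Y nu) z ∩ X mu := by
    rintro g ⟨⟨x, hx, rfl⟩, hg⟩
    obtain ⟨nx, hnx⟩ := hYsurj x
    have hxY : x ∈ Y nx := hnx ▸ DoubleCoset.mem_doubleCoset_self L R x
    -- upper bound : nx ≤ nu0 + lam
    have h1 : (1 : Γ) ∈ Y nu0 := by
      rw [hnu0]
      exact DoubleCoset.mem_doubleCoset.mpr ⟨1, L.one_mem, 1, R.one_mem, by simp⟩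
    have hup : nx ≤ nu0 + lam := by
      have : x ∈ Y nu0 * X lam := ⟨1, h1, x, hx, one_mul x⟩
      obtain ⟨_, ⟨n, rfl⟩, hn⟩ := SM2 nu0 lam hlam this
      simp only [Set.mem_iUnion, Set.mem_setOf_eq] at hn
      obtain ⟨hle, hmem⟩ := hn
      exact (Yuniq hxY hmem) ▸ hle
    -- lower bound : kz - mu ≤ nx
    have hlo : kz - mu ≤ nx := by
      have hzin : z ∈ Y nx * X mu := ⟨x, hxY, x⁻¹ * z, hg, by group⟩
      obtain ⟨_, ⟨n, rfl⟩, hn⟩ := SM2 nx mu hmu hzin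
      simp only [Set.mem_iUnion, Set.mem_setOf_eq] at hn
      obtain ⟨hle, hmem⟩ := hn
      have := (Yuniq hzY hmem) ▸ hle
      have := hcov kz (nx + mu) (-mu) this
      simpa [sub_eq_add_neg, add_assoc] using this
    exact Set.mem_biUnion ⟨hlo, hup⟩ ⟨⟨x, hxY, rfl⟩, hg⟩
  -- orbit sets are monotone along the inclusion into a finite union
  have horb : leftOrbits R (invMul (X lam) z ∩ X mu) ⊆
      ⋃ nu ∈ Set.Icc (kz - mu) (nu0 + lam), leftOrbits R (invMul (Y nu) z ∩ X mu) := by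
    rintro C ⟨g, hg, rfl⟩
    obtain ⟨S, ⟨n, rfl⟩, hS⟩ := key hg
    simp only [Set.mem_iUnion] at hS ⊢
    obtain ⟨hn, hgS⟩ := hS
    exact ⟨n, hn, g, hgS, rfl⟩
  exact Set.Finite.subset
    (Set.Finite.biUnion (hint (kz - mu) (nu0 + lam)) fun n _ => SM1 n mu hmu z) horb
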